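/- Let w be a word of length n over a linearly ordered alphabet Σ with |Σ| = σ. Then the number of pairs (i, j) such that the fragment w[i..j] is an order-preserving square but is not an ordinary square (i.e., w[i..j] is not of the form zz) is at most (σ choose 2)·n. -/

import Mathlib

/-- Over a linearly ordered alphabet, words `u` and `v` are order-preserving-equivalent if
`|u| = |v|` and there is a strictly increasing bijection `f : Alph(u) → Alph(v)` with
`v[i] = f(u[i])` for all `i`; equivalently, `v = u.map f` for some function `f` strictly
increasing on the set of letters of `u` (then `f` automatically maps `Alph(u)` bijectively
onto `Alph(v)`). -/
def OpEquiv {α : Type*} [LinearOrder α] (u v : List α) : Prop :=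
  ∃ f : α → α, StrictMonoOn f {a | a ∈ u} ∧ v = u.map f

/-- A strictly monotone map of a finite set onto itself is the identity. -/
private lemma finset_strictMonoOn_id {α : Type*} [LinearOrder α] [DecidableEq α]
    (S : Finset α) (f : α → α) (hf : StrictMonoOn f ↑S) (him : S.image f = S) :
    ∀ a ∈ S, f a = a := by
  by_contra h
  push_neg at h
  obtain ⟨a, haS, hfa⟩ := h
  have hD : (S.filter (fun c => f c ≠ c)).Nonempty :=
    ⟨a, Finset.mem_filter.mpr ⟨haS, hfa⟩⟩
  set a₀ := (S.filter (fun c => f c ≠ c)).min' hD with ha₀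
  have ha₀mem := (S.filter (fun c => f c ≠ c)).min'_mem hD
  rw [Finset.mem_filter] at ha₀mem
  obtain ⟨ha₀S, hfa₀⟩ := ha₀mem
  have hmin : ∀ c ∈ S, c < a₀ → f c = c := by
    intro c hc hlt
    by_contra hfc
    exact absurd hlt
      (not_lt.mpr (Finset.min'_le _ c (Finset.mem_filter.mpr ⟨hc, hfc⟩)))
  have hmem : ∀ c ∈ S, f c ∈ S := fun c hc => him ▸ Finset.mem_image_of_mem f hc
  rcases lt_or_gt_of_ne hfa₀ with hlt | hgt
  · have hb : f a₀ ∈ S := hmem _ ha₀S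
    have h1 : f (f a₀) = f a₀ := hmin _ hb hlt
    have h2 : f a₀ = a₀ := hf.injOn (Finset.mem_coe.mpr hb) (Finset.mem_coe.mpr ha₀S) h1
    exact hfa₀ h2
  · have hAB : ∀ c ∈ S.filter (a₀ ≤ ·), f c ∈ S.filter (a₀ < ·) := by
      intro c hc
      rw [Finset.mem_filter] at hc ⊢
      refine ⟨hmem _ hc.1, lt_of_lt_of_le hgt ?_⟩
      rcases eq_or_lt_of_le hc.2 with heq | h
      · exact le_of_eq (congrArg f heq)
      · exact le_of_lt (hf (Finset.mem_coe.mpr ha₀S) (Finset.mem_coe.mpr hc.1) h)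
    have hinj : Set.InjOn f ↑(S.filter (a₀ ≤ ·)) := by
      apply hf.injOn.mono
      intro c hc
      rw [Finset.mem_coe, Finset.mem_filter] at hc
      exact Finset.mem_coe.mpr hc.1
    have h1 : (S.filter (a₀ ≤ ·)).card ≤ (S.filter (a₀ < ·)).card :=
      Finset.card_le_card_of_injOn f hAB hinj
    have h2 : (S.filter (a₀ < ·)) ⊂ (S.filter (a₀ ≤ ·)) := by
      constructor
      · intro c hc
        rw [Finset.mem_filter] at hc ⊢
        exact ⟨hc.1, le_of_lt hc.2⟩
      · intro hsub
        have := hsub (Finset.mem_filter.mpr ⟨ha₀S, le_refl a₀⟩)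
        rw [Finset.mem_filter] at this
        exact lt_irrefl a₀ this.2
    exact absurd h1 (not_le.mpr (Finset.card_lt_card h2))

/-- Key structural lemma: in a non-trivial order-preserving square `uv` one can find letters
`a ≠ b` and a position `k` so that `a` occurs in `u` at `k` and nowhere later in `u` nor
anywhere in `v`, while `b` occurs in `v` at `k` and nowhere later in `v`. -/
private lemma key_exists {α : Type*} [LinearOrder α] {u v : List α} (f : α → α)
    (hmono : StrictMonoOn f {a | a ∈ u}) (hv : v = u.map f) (hne : u ≠ v) :
    ∃ a b k, k < u.length ∧ u[k]? = some a ∧ v[k]? = some b ∧ a ∉ v ∧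
      (∀ t, k < t → u[t]? ≠ some a) ∧ (∀ t, k < t → v[t]? ≠ some b) := by
  classical
  have hinj : Set.InjOn f {a | a ∈ u} := hmono.injOn
  -- find a letter of u that does not occur in v
  have hex : ∃ a, a ∈ u ∧ a ∉ v := by
    by_contra h
    push_neg at h
    have hsub : u.toFinset ⊆ v.toFinset := by
      intro c hc
      rw [List.mem_toFinset] at hc ⊢
      exact h c hc
    have himg : v.toFinset = u.toFinset.image f := by
      ext c
      simp [hv, List.mem_map]
    have hcard : v.toFinset.card ≤ u.toFinset.card := by
      rw [himg]; exact Finset.card_image_le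
    have heq : u.toFinset = v.toFinset := Finset.eq_of_subset_of_card_le hsub hcard
    have hid : ∀ c ∈ u.toFinset, f c = c := by
      apply finset_strictMonoOn_id _ f
      · rw [List.coe_toFinset]; exact hmono
      · rw [← himg, ← heq]
    apply hne
    rw [hv]
    have : u.map f = u.map id := List.map_congr_left
      (fun a ha => hid a (List.mem_toFinset.mpr ha))
    rw [this, List.map_id]
  obtain ⟨a, hau, hav⟩ := hex
  -- last occurrence of a in u
  have hKne : ((Finset.range u.length).filter (fun t => u[t]? = some a)).Nonempty := by
    obtain ⟨i, hi, hia⟩ := List.mem_iff_getElem.mp hau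
    exact ⟨i, Finset.mem_filter.mpr ⟨Finset.mem_range.mpr hi,
      List.getElem?_eq_some_iff.mpr ⟨hi, hia⟩⟩⟩
  set K := (Finset.range u.length).filter (fun t => u[t]? = some a) with hK
  set k := K.max' hKne with hkdef
  have hkmem := Finset.mem_filter.mp (K.max'_mem hKne)
  obtain ⟨hklen', hka⟩ := hkmem
  have hklen := Finset.mem_range.mp hklen'
  have hmaxu : ∀ t, k < t → u[t]? ≠ some a := by
    intro t ht hta
    obtain ⟨htlen, _⟩ := List.getElem?_eq_some_iff.mp hta
    have htK : t ∈ K :=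
      Finset.mem_filter.mpr ⟨Finset.mem_range.mpr htlen, hta⟩
    exact absurd (K.le_max' t htK) (not_le.mpr ht)
  refine ⟨a, f a, k, hklen, hka, ?_, hav, hmaxu, ?_⟩
  · rw [hv, List.getElem?_map, hka]
    rfl
  · intro t ht htb
    rw [hv, List.getElem?_map] at htb
    obtain ⟨c, hc1, hc2⟩ := Option.map_eq_some_iff.mp htb
    have hcu : c ∈ u := by
      obtain ⟨h1, h2⟩ := List.getElem?_eq_some_iff.mp hc1
      exact h2 ▸ List.getElem_mem h1
    have : c = a := hinj hcu hau hc2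
    exact hmaxu t ht (this ▸ hc1)

/-- Let `w` be a word of length `n` over a linearly ordered alphabet of size `σ`.  The
number of pairs of positions (encoded as (0-based start, end-exclusive) pairs) whose
fragment is an order-preserving square but not an ordinary square `z ++ z` is at most
`(σ choose 2) · n`. -/
theorem op_squares_not_squares_bound {α : Type*} [Fintype α] [LinearOrder α] (w : List α)
    (n : ℕ) (hn : w.length = n) :
    {p : ℕ × ℕ | ∃ x u v y : List α, w = x ++ u ++ v ++ y ∧
        x.length = p.1 ∧ x.length + u.length + v.length = p.2 ∧
        u.length = v.length ∧ OpEquiv u v ∧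
        ¬∃ z : List α, u ++ v = z ++ z}.ncard ≤ (Fintype.card α).choose 2 * n := by
  classical
  set S : Set (ℕ × ℕ) := {p : ℕ × ℕ | ∃ x u v y : List α, w = x ++ u ++ v ++ y ∧
        x.length = p.1 ∧ x.length + u.length + v.length = p.2 ∧
        u.length = v.length ∧ OpEquiv u v ∧
        ¬∃ z : List α, u ++ v = z ++ z} with hSdef
  rcases isEmpty_or_nonempty α with hα | hα
  · have hSempty : S = ∅ := by
      ext p
      simp only [hSdef, Set.mem_setOf_eq, Set.mem_empty_iff_false, iff_false, not_exists]
      intro x u v y hp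
      obtain ⟨hw, hx, h2, hlen, hop, hnsq⟩ := hp
      have hu : u = [] := List.eq_nil_iff_forall_not_mem.mpr fun a _ => (hα.false a).elim
      have hvnil : v = [] := List.eq_nil_iff_forall_not_mem.mpr fun a _ => (hα.false a).elim
      exact hnsq [] (by simp [hu, hvnil])
    rw [hSempty, Set.ncard_empty]
    exact Nat.zero_le _
  · haveI : Inhabited α := Classical.inhabited_of_nonempty hα
    -- the charging predicate
    set P : ℕ × ℕ → α × α → Prop := fun p ab =>
      ab.1 ≠ ab.2 ∧ 1 ≤ p.2 ∧ p.2 ≤ n ∧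
      ∃ pa pb : ℕ, pa < pb ∧ pb < p.2 ∧ p.2 = p.1 + 2 * (pb - pa) ∧
        w[pa]? = some ab.1 ∧ w[pb]? = some ab.2 ∧
        (∀ t, pa < t → t < p.2 → w[t]? ≠ some ab.1) ∧
        (∀ t, pb < t → t < p.2 → w[t]? ≠ some ab.2) with hPdef
    have hex : ∀ p ∈ S, ∃ ab : α × α, P p ab := by
      rintro ⟨p1, p2⟩ hp
      simp only [hSdef, Set.mem_setOf_eq] at hp
      obtain ⟨x, u, v, y, hw, hx, h2, hlen, ⟨f, hmono, hvmap⟩, hnsq⟩ := hp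
      have hune : u ≠ v := fun h => hnsq ⟨u, by rw [h]⟩
      have hL : 0 < u.length := by
        by_contra h
        push_neg at h
        have hu0 : u = [] := List.eq_nil_of_length_eq_zero (Nat.le_zero.mp h)
        have hv0 : v = [] := List.eq_nil_of_length_eq_zero (by omega)
        exact hune (hu0.trans hv0.symm)
      obtain ⟨a, b, k, hkL, huk, hvk, hav, hua, hvb⟩ := key_exists f hmono hvmap hune
      have hp2 : p2 = p1 + 2 * u.length := by omega
      have hnw : n = x.length + u.length + v.length + y.length := by
        have := congrArg List.length hw
        simp only [List.length_append] at this
        omega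
      -- index calculations in w
      have hw' : w = x ++ (u ++ (v ++ y)) := by
        rw [hw]; simp [List.append_assoc]
      have hgu : ∀ s, s < u.length → w[x.length + s]? = u[s]? := by
        intro s hs
        rw [hw', List.getElem?_append_right (by omega)]
        have h1 : x.length + s - x.length = s := by omega
        rw [h1, List.getElem?_append, if_pos hs]
      have hgv : ∀ s, s < v.length → w[x.length + u.length + s]? = v[s]? := by
        intro s hs
        rw [hw', List.getElem?_append_right (by omega)]
        have h1 : x.length + u.length + s - x.length = u.length + s := by omega
        rw [h1, List.getElem?_append_right (by omega)]
        have h2' : u.length + s - u.length = s := by omega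
        rw [h2', List.getElem?_append, if_pos hs]
      have hab : a ≠ b := by
        intro h
        apply hav
        obtain ⟨h1, h2'⟩ := List.getElem?_eq_some_iff.mp hvk
        exact h ▸ (h2' ▸ List.getElem_mem h1)
      refine ⟨(a, b), hab, by omega, by omega,
        p1 + k, p1 + u.length + k, by omega, by omega, by simp only; omega, ?_, ?_, ?_, ?_⟩
      · -- w[p1 + k]? = some a
        have : p1 + k = x.length + k := by omega
        rw [this, hgu k hkL, huk]
      · -- w[p1 + u.length + k]? = some b
        have : p1 + u.length + k = x.length + u.length + k := by omega
        rw [this, hgv k (by omega), hvk]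
      · -- no a strictly after p1 + k before p2
        intro t ht1 ht2 hta
        simp only at ht1 ht2 hta
        by_cases hcase : t < p1 + u.length
        · have heqt : t = x.length + (t - p1) := by omega
          rw [heqt, hgu (t - p1) (by omega)] at hta
          exact hua (t - p1) (by omega) hta
        · have heqt : t = x.length + u.length + (t - p1 - u.length) := by omega
          rw [heqt, hgv (t - p1 - u.length) (by omega)] at hta
          apply hav
          obtain ⟨h1, h2'⟩ := List.getElem?_eq_some_iff.mp hta
          exact h2' ▸ List.getElem_mem h1
      · -- no b strictly after p1 + u.length + k before p2
        intro t ht1 ht2 htb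
        simp only at ht1 ht2 htb
        have heqt : t = x.length + u.length + (t - p1 - u.length) := by omega
        rw [heqt, hgv (t - p1 - u.length) (by omega)] at htb
        exact hvb (t - p1 - u.length) (by omega) htb
    -- the charging function
    set Φ : ℕ × ℕ → ℕ × Sym2 α := fun p =>
      (p.2 - 1, if h : ∃ ab : α × α, P p ab then Sym2.mk h.choose.1 h.choose.2
        else Sym2.mk default default) with hΦdef
    have hΦ : ∀ p ∈ S, ∃ ab : α × α, P p ab ∧ Φ p = (p.2 - 1, Sym2.mk ab.1 ab.2) := by
      intro p hp
      have h := hex p hp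
      exact ⟨h.choose, h.choose_spec, by simp only [hΦdef, dif_pos h]⟩
    set t : Finset (ℕ × Sym2 α) :=
      Finset.range n ×ˢ (Finset.univ.filter fun s : Sym2 α => ¬ s.IsDiag) with htdef
    have hmaps : ∀ p ∈ S, Φ p ∈ (↑t : Set (ℕ × Sym2 α)) := by
      intro p hp
      obtain ⟨ab, hP, hΦp⟩ := hΦ p hp
      rw [hΦp]
      obtain ⟨hne, h1, h2, _⟩ := hP
      rw [Finset.mem_coe, htdef, Finset.mem_product]
      constructor
      · exact Finset.mem_range.mpr (by omega)
      · rw [Finset.mem_filter]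
        refine ⟨Finset.mem_univ _, ?_⟩
        have : Sym2.mk ab.1 ab.2 = s(ab.1, ab.2) := by rfl
        rw [this, Sym2.mk_isDiag_iff]
        exact hne
    have hinjo : Set.InjOn Φ S := by
      intro p hp q hq hpq
      obtain ⟨ab, hP, hΦp⟩ := hΦ p hp
      obtain ⟨cd, hQ, hΦq⟩ := hΦ q hq
      rw [hΦp, hΦq] at hpq
      have h1 : p.2 - 1 = q.2 - 1 := congrArg Prod.fst hpq
      have h2 : Sym2.mk ab.1 ab.2 = Sym2.mk cd.1 cd.2 := congrArg Prod.snd hpq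
      obtain ⟨habne, hp1, hpn, pa, pb, hab1, hab2, hab3, hwa, hwb, hfa, hfb⟩ := hP
      obtain ⟨hcdne, hq1, hqn, qa, qb, hcd1, hcd2, hcd3, hwc, hwd, hfc, hfd⟩ := hQ
      have he : p.2 = q.2 := by omega
      have uniq : ∀ (c : α) (r r' : ℕ), r < p.2 → r' < p.2 →
          w[r]? = some c → (∀ s, r < s → s < p.2 → w[s]? ≠ some c) →
          w[r']? = some c → (∀ s, r' < s → s < p.2 → w[s]? ≠ some c) → r = r' := by
        intro c r r' hr hr' g1 g2 g3 g4
        rcases lt_trichotomy r r' with h | h | h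
        · exact absurd g3 (g2 r' h hr')
        · exact h
        · exact absurd g1 (g4 r h hr)
      rw [← he] at hcd2 hfc hfd
      have hmk : s(ab.1, ab.2) = s(cd.1, cd.2) := h2
      rcases Sym2.eq_iff.mp hmk with ⟨e1, e2⟩ | ⟨e1, e2⟩
      · -- same ordered pair
        rw [← e1] at hwc hfc
        rw [← e2] at hwd hfd
        have hpa : pa = qa := uniq ab.1 pa qa (by omega) (by omega) hwa hfa hwc hfc
        have hpb : pb = qb := uniq ab.2 pb qb (by omega) (by omega) hwb hfb hwd hfd
        have hfst : p.1 = q.1 := by omega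
        exact Prod.ext hfst he
      · -- swapped pair: impossible
        rw [← e1] at hwd hfd
        rw [← e2] at hwc hfc
        have hpa : pa = qb := uniq ab.1 pa qb (by omega) (by omega) hwa hfa hwd hfd
        have hpb : pb = qa := uniq ab.2 pb qa (by omega) (by omega) hwb hfb hwc hfc
        omega
    calc S.ncard ≤ (↑t : Set (ℕ × Sym2 α)).ncard :=
          Set.ncard_le_ncard_of_injOn Φ hmaps hinjo (t.finite_toSet)
      _ = t.card := Set.ncard_coe_finset t
      _ = n * ((Finset.univ.filter fun s : Sym2 α => ¬ s.IsDiag)).card := by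
          rw [htdef, Finset.card_product, Finset.card_range]
      _ = n * (Fintype.card α).choose 2 := by
          rw [← Fintype.card_subtype, Sym2.card_subtype_not_diag]
      _ = (Fintype.card α).choose 2 * n := Nat.mul_comm _ _
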